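/- With identical cardinal utilities (all agents share the same utility u_j > 0 for each item o_j), the Balanced Like mechanism is ex ante equivalent to the Like mechanism, and both are Pareto efficient ex ante and ex post. -/

import Mathlib

/-!
Online fair division with additive utilities (Aleksandrov & Walsh).

Agents are `Fin n`, items `Fin m` arriving in index order. A bid/utility
profile is `Bids n m`. An allocation assigns to each item an optional agent
(`none` = discarded). An online mechanism returns, for every instance, a
probability distribution over allocations, where the distribution over the
first `j` items depends only on the bids for the first `j` items.
-/

open Finset
open scoped Classical

noncomputable section

abbrev Bids (n m : ℕ) := Fin n → Fin m → ℝ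
abbrev Alloc (n m : ℕ) := Fin m → Option (Fin n)

/-- An online mechanism for online fair division. -/
structure OnlineMech where
  /-- probability of returning allocation `π` on bids `v` -/
  d : ∀ (n m : ℕ), Bids n m → Alloc n m → ℝ
  nonneg : ∀ n m v π, 0 ≤ d n m v π
  total : ∀ n m v, ∑ π : Alloc n m, d n m v π = 1
  /-- online: the joint distribution of the allocation of items `o_1,…,o_j`
  depends only on the bids for items `o_1,…,o_j`. -/
  online : ∀ (n m : ℕ) (v w : Bids n m) (j : Fin m),
      (∀ (i : Fin n) (k : Fin m), k ≤ j → v i k = w i k) →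
      ∀ σ : Alloc n m,
        ∑ π ∈ univ.filter (fun π : Alloc n m => ∀ k ≤ j, π k = σ k), d n m v π
      = ∑ π ∈ univ.filter (fun π : Alloc n m => ∀ k ≤ j, π k = σ k), d n m w π

/-- Marginal probability that agent `i` receives item `j` under distribution `d`. -/
def genMarg {n m : ℕ} (d : Alloc n m → ℝ) (j : Fin m) (i : Fin n) : ℝ :=
  ∑ π ∈ univ.filter (fun π : Alloc n m => π j = some i), d π

/-- `p_i(Π_j)`: probability agent `i` gets item `j` under mechanism `M` on bids `v`. -/
def marg (M : OnlineMech) {n m : ℕ} (v : Bids n m) (j : Fin m) (i : Fin n) : ℝ :=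
  genMarg (M.d n m v) j i

/-- Non-wasteful: each item is allocated (with probability one in total) only
among agents bidding positively for it, and is discarded iff no one bids
positively for it. -/
def NonWasteful (M : OnlineMech) : Prop :=
  ∀ (n m : ℕ) (v : Bids n m) (π : Alloc n m), 0 < M.d n m v π →
    ∀ j : Fin m,
      ((∀ i, v i j = 0) → π j = none) ∧
      ((∃ i, 0 < v i j) → π j ≠ none) ∧
      (∀ i, π j = some i → 0 < v i j)

/-- Replace agent `i`'s bid for item `j` by `c`. -/
def setBid {n m : ℕ} (v : Bids n m) (i : Fin n) (j : Fin m) (c : ℝ) : Bids n m :=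
  fun a k => if a = i ∧ k = j then c else v a k

/-- Replace agent `i`'s whole bid vector by `b`. -/
def setAgent {n m : ℕ} (v : Bids n m) (i : Fin n) (b : Fin m → ℝ) : Bids n m :=
  fun a => if a = i then b else v a

/-- Strategy-proof: no agent can strictly increase their expected (true) utility by
reporting any sequence of bids other than their sincere utilities, others sincere. -/
def StrategyProof (M : OnlineMech) : Prop :=
  ∀ (n m : ℕ) (u : Bids n m), (∀ i j, 0 ≤ u i j) →
    ∀ (i : Fin n) (b : Fin m → ℝ), (∀ j, 0 ≤ b j) →
      ∑ j, marg M (setAgent u i b) j i * u i j ≤ ∑ j, marg M u j i * u i j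

/-- Step mechanism: an agent's probability for the current item is `0` on a zero
bid and is invariant under the magnitude of a positive bid (all else fixed). -/
def IsStep (M : OnlineMech) : Prop :=
  ∀ (n m : ℕ) (v : Bids n m) (i : Fin n) (j : Fin m),
    (v i j = 0 → marg M v j i = 0) ∧
    (∀ c : ℝ, 0 < c → 0 < v i j → marg M (setBid v i j c) j i = marg M v j i)

/-- Memoryless mechanism: an agent's probability for item `j` does not depend on
that agent's bids for the earlier items `o_1,…,o_{j-1}` (their bid for `j` and
all other agents' bids being fixed). -/
def Memoryless (M : OnlineMech) : Prop :=
  ∀ (n m : ℕ) (v w : Bids n m) (i : Fin n) (j : Fin m),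
    (∀ a, a ≠ i → v a = w a) → (∀ k : Fin m, j ≤ k → v i k = w i k) →
    marg M v j i = marg M w j i

/-- Online strategy-proof: at each round `j`, no agent can strictly increase their
expected utility over the first `j` items by misreporting only the bid for item
`o_j`, having bid sincerely before (others sincere). -/
def OnlineSP (M : OnlineMech) : Prop :=
  ∀ (n m : ℕ) (u : Bids n m), (∀ i j, 0 ≤ u i j) →
    ∀ (i : Fin n) (j : Fin m) (c : ℝ), 0 ≤ c →
      ∑ h ∈ univ.filter (fun h : Fin m => h ≤ j), marg M (setBid u i j c) h i * u i h
      ≤ ∑ h ∈ univ.filter (fun h : Fin m => h ≤ j), marg M u h i * u i h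

/-- Agents bidding positively for item `j`. -/
def likeSet {n m : ℕ} (v : Bids n m) (j : Fin m) : Finset (Fin n) :=
  univ.filter (fun a : Fin n => 0 < v a j)

/-- Probability of agent `i` for item `j` under the Like mechanism: uniform among
positive bidders. -/
def likeProb {n m : ℕ} (v : Bids n m) (j : Fin m) (i : Fin n) : ℝ :=
  if i ∈ likeSet v j then ((likeSet v j).card : ℝ)⁻¹ else 0

/-- Ex ante equivalence to the Like mechanism: on every instance, every agent
receives every item with the same probability as under Like. -/
def ExAnteLike (M : OnlineMech) : Prop :=
  ∀ (n m : ℕ) (u : Bids n m), (∀ i j, 0 ≤ u i j) →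
    ∀ (i : Fin n) (j : Fin m), marg M u j i = likeProb u j i

/-- Envy-free ex ante (sincere bidding). -/
def EFA (M : OnlineMech) : Prop :=
  ∀ (n m : ℕ) (u : Bids n m), (∀ i j, 0 ≤ u i j) →
    ∀ i k : Fin n, ∑ h, marg M u h k * u i h ≤ ∑ h, marg M u h i * u i h

/-- Shared envy-free ex ante: `i`'s expected utility restricted to the items
`k` also likes is at least `i`'s expected utility for `k`'s expected allocation. -/
def SEFA (M : OnlineMech) : Prop :=
  ∀ (n m : ℕ) (u : Bids n m), (∀ i j, 0 ≤ u i j) →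
    ∀ i k : Fin n,
      ∑ h, marg M u h k * u i h
      ≤ ∑ h ∈ univ.filter (fun h : Fin m => 0 < u k h), marg M u h i * u i h

/-- `u_{ik}(π)`: agent `i`'s utility for agent `k`'s bundle in allocation `π`. -/
def util {n m : ℕ} (u : Bids n m) (i k : Fin n) (π : Alloc n m) : ℝ :=
  ∑ j ∈ univ.filter (fun j : Fin m => π j = some k), u i j

/-- Pareto efficiency (ex post) of an allocation. -/
def ParetoEff {n m : ℕ} (u : Bids n m) (π : Alloc n m) : Prop :=
  ¬ ∃ π' : Alloc n m,
      (∀ i, util u i i π ≤ util u i i π') ∧ ∃ i, util u i i π < util u i i π'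

/-- Pareto efficiency ex post of a mechanism (sincere bidding). -/
def PEP (M : OnlineMech) : Prop :=
  ∀ (n m : ℕ) (u : Bids n m), (∀ i j, 0 ≤ u i j) →
    ∀ π : Alloc n m, 0 < M.d n m u π → ParetoEff u π

/-- Ex ante Pareto efficiency of a vector of item-allocation probabilities `f`:
no feasible random assignment `q` gives every agent at least their expected
utility and some agent strictly more. -/
def margPEA {n m : ℕ} (u : Bids n m) (f : Fin m → Fin n → ℝ) : Prop :=
  ¬ ∃ q : Fin n → Fin m → ℝ,
      (∀ i j, 0 ≤ q i j) ∧ (∀ j, ∑ i, q i j ≤ 1) ∧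
      (∀ i, ∑ h, f h i * u i h ≤ ∑ h, q i h * u i h) ∧
      (∃ i, ∑ h, f h i * u i h < ∑ h, q i h * u i h)

/-- Pareto efficiency ex ante of a mechanism (sincere bidding). -/
def PEA (M : OnlineMech) : Prop :=
  ∀ (n m : ℕ) (u : Bids n m), (∀ i j, 0 ≤ u i j) → margPEA u (marg M u)

/-- Envy-freeness ex ante at every prefix of the item sequence. -/
def PrefixEFA (M : OnlineMech) : Prop :=
  ∀ (n m : ℕ) (u : Bids n m), (∀ i j, 0 ≤ u i j) →
    ∀ (j : Fin m) (i k : Fin n),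
      ∑ h ∈ univ.filter (fun h : Fin m => h ≤ j), marg M u h k * u i h
      ≤ ∑ h ∈ univ.filter (fun h : Fin m => h ≤ j), marg M u h i * u i h

/-- The allocation produced by Online Serial Dictator with priority order `σ`
(lower `σ`-value = higher priority): each item goes to the highest-priority
positive bidder, and is discarded if there is none. -/
def osdAlloc {n m : ℕ} (σ : Equiv.Perm (Fin n)) (v : Bids n m) : Alloc n m := fun j =>
  if h : (likeSet v j).Nonempty then
    some (σ.symm (((likeSet v j).image σ).min' (h.image σ))) else none

/-- `i`'s utility for `k`'s bundle restricted to the first `j` items. -/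
def utilUpTo {n m : ℕ} (u : Bids n m) (i k : Fin n) (π : Alloc n m) (j : ℕ) : ℝ :=
  ∑ h ∈ univ.filter (fun h : Fin m => (h : ℕ) < j ∧ π h = some k), u i h

/-- Pareto efficiency of the allocation of the first `j` items. -/
def PEUpTo {n m : ℕ} (u : Bids n m) (π : Alloc n m) (j : ℕ) : Prop :=
  ¬ ∃ π' : Alloc n m,
      (∀ i, utilUpTo u i i π j ≤ utilUpTo u i i π' j) ∧
      ∃ i, utilUpTo u i i π j < utilUpTo u i i π' j

/-- Number of items among `o_1,…,o_{j-1}` held by agent `a` in `π`. -/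
def countBefore {n m : ℕ} (π : Alloc n m) (a : Fin n) (j : Fin m) : ℕ :=
  (univ.filter (fun k : Fin m => k < j ∧ π k = some a)).card

/-- Feasible agents for item `j` under Balanced Like: positive bidders holding
the fewest earlier items among positive bidders. -/
def blFeasSet {n m : ℕ} (u : Bids n m) (π : Alloc n m) (j : Fin m) : Finset (Fin n) :=
  univ.filter (fun a : Fin n =>
    0 < u a j ∧ ∀ b : Fin n, 0 < u b j → countBefore π a j ≤ countBefore π b j)

/-- Probability that Balanced Like returns allocation `π` (product of the
uniform conditional probabilities round by round). -/
def blDist {n m : ℕ} (u : Bids n m) (π : Alloc n m) : ℝ :=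
  ∏ j : Fin m,
    match π j with
    | none => if ∀ i, ¬ 0 < u i j then 1 else 0
    | some i => if i ∈ blFeasSet u π j then ((blFeasSet u π j).card : ℝ)⁻¹ else 0

/-- Probability that the Like mechanism returns allocation `π`. -/
def likeDist {n m : ℕ} (u : Bids n m) (π : Alloc n m) : ℝ :=
  ∏ j : Fin m,
    match π j with
    | none => if ∀ i, ¬ 0 < u i j then 1 else 0
    | some i => if i ∈ likeSet u j then ((likeSet u j).card : ℝ)⁻¹ else 0

/-- Feasible agents for item `j` under Maximum Like: positive bidders with the
maximum bid. -/
def mlFeasSet {n m : ℕ} (u : Bids n m) (j : Fin m) : Finset (Fin n) :=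
  univ.filter (fun a : Fin n => 0 < u a j ∧ ∀ b : Fin n, u b j ≤ u a j)

/-- Probability that Maximum Like returns allocation `π`. -/
def mlDist {n m : ℕ} (u : Bids n m) (π : Alloc n m) : ℝ :=
  ∏ j : Fin m,
    match π j with
    | none => if ∀ i, ¬ 0 < u i j then 1 else 0
    | some i => if i ∈ mlFeasSet u j then ((mlFeasSet u j).card : ℝ)⁻¹ else 0


lemma kernel_sum {n m : ℕ} (f : Fin m → Alloc n m → ℝ)
    (hdep : ∀ (j : Fin m) (π π' : Alloc n m), (∀ k, k ≤ j → π k = π' k) → f j π = f j π')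
    (hsum : ∀ (j : Fin m) (π : Alloc n m),
      ∑ c : Option (Fin n), f j (Function.update π j c) = 1) :
    ∑ π : Alloc n m, ∏ j, f j π = 1 := by
  have key : ∀ t : ℕ, t ≤ m →
      ∑ π : Alloc n m, ∏ j ∈ univ.filter (fun j : Fin m => (j : ℕ) < t), f j π
        = ((n : ℝ) + 1) ^ (m - t) := by
    intro t
    induction t with
    | zero =>
      intro _
      have : (univ.filter (fun j : Fin m => (j : ℕ) < 0)) = ∅ := by
        ext j; simp
      simp only [this, prod_empty, sum_const, card_univ, nsmul_eq_mul, mul_one]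
      have : Fintype.card (Alloc n m) = (n + 1) ^ m := by
        simp [Fintype.card_fun]
      rw [this]
      push_cast
      norm_num
    | succ t ih =>
      intro ht
      have ht' : t < m := ht
      have iht := ih (le_of_lt ht')
      set jt : Fin m := ⟨t, ht'⟩ with hjt
      set e := Equiv.funSplitAt jt (Option (Fin n)) with he
      set base : ({k : Fin m // k ≠ jt} → Option (Fin n)) → Alloc n m :=
        fun g => e.symm (none, g) with hbase
      have hA : ∀ (c : Option (Fin n)) g, e.symm (c, g) = Function.update (base g) jt c := by
        intro c g
        funext k
        by_cases hk : k = jt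
        · subst hk; simp [he, hbase, Equiv.funSplitAt, Equiv.piSplitAt]
        · simp [he, hbase, Equiv.funSplitAt, Equiv.piSplitAt, hk, Function.update_of_ne hk]
      have hB : ∀ (c : Option (Fin n)) g (j : Fin m), (j : ℕ) < t →
          f j (e.symm (c, g)) = f j (base g) := by
        intro c g j hj
        apply hdep
        intro k hk
        have hkne : k ≠ jt := by
          intro hkk
          rw [hkk] at hk
          have : (jt : ℕ) ≤ (j : ℕ) := hk
          simp [hjt] at this
          omega
        simp [he, hbase, Equiv.funSplitAt, Equiv.piSplitAt, hkne]
      have hfilter : univ.filter (fun j : Fin m => (j : ℕ) < t + 1)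
          = insert jt (univ.filter (fun j : Fin m => (j : ℕ) < t)) := by
        ext j
        simp [Fin.ext_iff, hjt, Nat.lt_succ_iff_lt_or_eq]
        omega
      have hjtnot : jt ∉ univ.filter (fun j : Fin m => (j : ℕ) < t) := by
        simp [hjt]
      -- rewrite both sums via the equivalence
      have hsplit : ∀ F : Alloc n m → ℝ,
          ∑ π : Alloc n m, F π = ∑ c : Option (Fin n),
            ∑ g : ({k : Fin m // k ≠ jt} → Option (Fin n)), F (e.symm (c, g)) := by
        intro F
        rw [← Equiv.sum_comp e.symm F, Fintype.sum_prod_type]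
      have hSt : ∑ π : Alloc n m, ∏ j ∈ univ.filter (fun j : Fin m => (j : ℕ) < t), f j π
          = ((n : ℝ) + 1) * ∑ g, ∏ j ∈ univ.filter (fun j : Fin m => (j : ℕ) < t), f j (base g) := by
        rw [hsplit]
        have : ∀ c : Option (Fin n), ∀ g,
            ∏ j ∈ univ.filter (fun j : Fin m => (j : ℕ) < t), f j (e.symm (c, g))
            = ∏ j ∈ univ.filter (fun j : Fin m => (j : ℕ) < t), f j (base g) := by
          intro c g
          apply prod_congr rfl
          intro j hj
          exact hB c g j (by simpa using hj)
        calc ∑ c : Option (Fin n), ∑ g, ∏ j ∈ univ.filter (fun j : Fin m => (j : ℕ) < t), f j (e.symm (c, g))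
            = ∑ _c : Option (Fin n), ∑ g, ∏ j ∈ univ.filter (fun j : Fin m => (j : ℕ) < t), f j (base g) := by
              apply sum_congr rfl; intro c _; apply sum_congr rfl; intro g _; exact this c g
          _ = ((n : ℝ) + 1) * ∑ g, ∏ j ∈ univ.filter (fun j : Fin m => (j : ℕ) < t), f j (base g) := by
              rw [sum_const, card_univ, Fintype.card_option, Fintype.card_fin, nsmul_eq_mul]
              push_cast; ring
      have hSt1 : ∑ π : Alloc n m, ∏ j ∈ univ.filter (fun j : Fin m => (j : ℕ) < t + 1), f j π
          = ∑ g, ∏ j ∈ univ.filter (fun j : Fin m => (j : ℕ) < t), f j (base g) := by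
        rw [hsplit]
        rw [Finset.sum_comm]
        apply sum_congr rfl
        intro g _
        have : ∀ c : Option (Fin n),
            ∏ j ∈ univ.filter (fun j : Fin m => (j : ℕ) < t + 1), f j (e.symm (c, g))
            = f jt (Function.update (base g) jt c)
              * ∏ j ∈ univ.filter (fun j : Fin m => (j : ℕ) < t), f j (base g) := by
          intro c
          rw [hfilter, prod_insert hjtnot, hA]
          congr 1
          apply prod_congr rfl
          intro j hj
          rw [← hA]
          exact hB c g j (by simpa using hj)
        rw [sum_congr rfl (fun c _ => this c), ← sum_mul, hsum jt (base g), one_mul]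
      have hne : ((n : ℝ) + 1) ≠ 0 := by positivity
      have hexp : ((n : ℝ) + 1) ^ (m - t) = ((n : ℝ) + 1) * ((n : ℝ) + 1) ^ (m - (t + 1)) := by
        have : m - t = (m - (t + 1)) + 1 := by omega
        rw [this, pow_succ]; ring
      rw [hSt1]
      have := hSt.symm.trans iht
      rw [hexp] at this
      exact mul_left_cancel₀ hne this
  have h := key m le_rfl
  have hfu : (univ.filter (fun j : Fin m => (j : ℕ) < m)) = univ := by
    ext j; simp [j.2]
  rw [hfu] at h
  simpa using h

section auxlem
variable {n m : ℕ} (w : Fin m → ℝ) (u : Bids n m)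

/-- action of an agent permutation on allocations -/
def actP (σ : Equiv.Perm (Fin n)) (π : Alloc n m) : Alloc n m :=
  fun k => (π k).map σ

lemma actP_eq_some (σ : Equiv.Perm (Fin n)) (π : Alloc n m) (k : Fin m) (a : Fin n) :
    actP σ π k = some (σ a) ↔ π k = some a := by
  unfold actP
  cases h : π k with
  | none => simp
  | some b => simp [σ.injective.eq_iff]

lemma genMarg_symm_eq (hn : 0 < n) (d : Alloc n m → ℝ)
    (hsum : ∑ π : Alloc n m, d π = 1)
    (hnone : ∀ π : Alloc n m, d π ≠ 0 → ∀ j, π j ≠ none)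
    (hsymm : ∀ (σ : Equiv.Perm (Fin n)) (π : Alloc n m), d (actP σ π) = d π)
    (j : Fin m) (i : Fin n) : genMarg d j i = (n : ℝ)⁻¹ := by
  have hall : ∀ i' : Fin n, genMarg d j i' = genMarg d j i := by
    intro i'
    unfold genMarg
    set σ := Equiv.swap i i' with hσ
    apply Finset.sum_nbij' (fun π => actP σ π) (fun π => actP σ π)
    · intro π hπ
      simp only [mem_filter, mem_univ, true_and] at hπ ⊢
      have := (actP_eq_some σ π j i').mpr hπ
      simpa [hσ, Equiv.swap_apply_right] using this
    · intro π hπ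
      simp only [mem_filter, mem_univ, true_and] at hπ ⊢
      have := (actP_eq_some σ π j i).mpr hπ
      simpa [hσ, Equiv.swap_apply_left] using this
    · intro π _
      funext k
      unfold actP
      cases π k <;> simp [hσ, Equiv.swap_apply_self]
    · intro π _
      funext k
      unfold actP
      cases π k <;> simp [hσ, Equiv.swap_apply_self]
    · intro π _
      exact (hsymm σ π).symm
  have htot : ∑ i' : Fin n, genMarg d j i' = 1 := by
    have h1 : ∀ i' : Fin n, genMarg d j i' = ∑ π : Alloc n m, if π j = some i' then d π else 0 := by
      intro i'; unfold genMarg; rw [Finset.sum_filter]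
    rw [Finset.sum_congr rfl (fun i' _ => h1 i'), Finset.sum_comm, ← hsum]
    apply Finset.sum_congr rfl
    intro π _
    cases h : π j with
    | none =>
      have hd : d π = 0 := by
        by_contra hd
        exact hnone π hd j h
      simp [h, hd]
    | some a => simp [h]
  have hn' : (n : ℝ) ≠ 0 := Nat.cast_ne_zero.mpr hn.ne'
  have hmul : (n : ℝ) * genMarg d j i = 1 := by
    rw [← htot, Finset.sum_congr rfl (fun i' _ => hall i'), sum_const, card_univ,
      Fintype.card_fin, nsmul_eq_mul]
  exact eq_inv_of_mul_eq_one_left (by rw [mul_comm]; exact hmul)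
section identical
variable {n m : ℕ}

lemma upos (w : Fin m → ℝ) (u : Bids n m) (hw : ∀ j, 0 < w j) (hu : ∀ i j, u i j = w j) :
    ∀ (a : Fin n) (j : Fin m), 0 < u a j := fun a j => (hu a j).symm ▸ hw j

lemma countBefore_actP (σ : Equiv.Perm (Fin n)) (π : Alloc n m) (b : Fin n) (j : Fin m) :
    countBefore (actP σ π) b j = countBefore π (σ.symm b) j := by
  unfold countBefore
  congr 1
  apply filter_congr
  intro k _
  have : actP σ π k = some b ↔ π k = some (σ.symm b) := by
    rw [← actP_eq_some σ π k (σ.symm b), Equiv.apply_symm_apply]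
  rw [this]

lemma mem_blFeasSet_actP {w : Fin m → ℝ} {u : Bids n m} (hw : ∀ j, 0 < w j)
    (hu : ∀ i j, u i j = w j) (σ : Equiv.Perm (Fin n)) (π : Alloc n m) (j : Fin m) (a : Fin n) :
    a ∈ blFeasSet u (actP σ π) j ↔ σ.symm a ∈ blFeasSet u π j := by
  unfold blFeasSet
  simp only [mem_filter, mem_univ, true_and]
  constructor
  · rintro ⟨-, hmin⟩
    refine ⟨upos w u hw hu _ _, fun b _ => ?_⟩
    have := hmin (σ b) (upos w u hw hu _ _)
    rwa [countBefore_actP, countBefore_actP, Equiv.symm_apply_apply] at this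
  · rintro ⟨-, hmin⟩
    refine ⟨upos w u hw hu _ _, fun b _ => ?_⟩
    rw [countBefore_actP, countBefore_actP]
    exact hmin (σ.symm b) (upos w u hw hu _ _)

lemma blFeasSet_actP {w : Fin m → ℝ} {u : Bids n m} (hw : ∀ j, 0 < w j)
    (hu : ∀ i j, u i j = w j) (σ : Equiv.Perm (Fin n)) (π : Alloc n m) (j : Fin m) :
    blFeasSet u (actP σ π) j = (blFeasSet u π j).map σ.toEmbedding := by
  ext a
  rw [mem_blFeasSet_actP hw hu]
  simp [Finset.mem_map_equiv]

lemma blDist_actP {w : Fin m → ℝ} {u : Bids n m} (hw : ∀ j, 0 < w j)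
    (hu : ∀ i j, u i j = w j) (σ : Equiv.Perm (Fin n)) (π : Alloc n m) :
    blDist u (actP σ π) = blDist u π := by
  unfold blDist
  apply prod_congr rfl
  intro k _
  cases h : π k with
  | none =>
    have h' : actP σ π k = none := by simp [actP, h]
    rw [h']
  | some a =>
    have h' : actP σ π k = some (σ a) := by simp [actP, h]
    rw [h']
    have hc : (blFeasSet u (actP σ π) k).card = (blFeasSet u π k).card := by
      rw [blFeasSet_actP hw hu, Finset.card_map]
    have hm : σ a ∈ blFeasSet u (actP σ π) k ↔ a ∈ blFeasSet u π k := by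
      rw [mem_blFeasSet_actP hw hu, Equiv.symm_apply_apply]
    simp only [hc]
    by_cases hmem : a ∈ blFeasSet u π k
    · rw [if_pos (hm.mpr hmem), if_pos hmem]
    · rw [if_neg (fun hh => hmem (hm.mp hh)), if_neg hmem]

lemma blFeasSet_indep (u : Bids n m) (π π' : Alloc n m) (j : Fin m)
    (h : ∀ k, k < j → π k = π' k) : blFeasSet u π j = blFeasSet u π' j := by
  have hcb : ∀ a, countBefore π a j = countBefore π' a j := by
    intro a
    unfold countBefore
    congr 1
    apply filter_congr
    intro k _
    constructor
    · rintro ⟨h1, h2⟩; exact ⟨h1, by rw [← h k h1]; exact h2⟩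
    · rintro ⟨h1, h2⟩; exact ⟨h1, by rw [h k h1]; exact h2⟩
  unfold blFeasSet
  apply filter_congr
  intro a _
  simp only [hcb]

lemma blFeasSet_nonempty {w : Fin m → ℝ} {u : Bids n m} (hn : 0 < n) (hw : ∀ j, 0 < w j)
    (hu : ∀ i j, u i j = w j) (π : Alloc n m) (j : Fin m) : (blFeasSet u π j).Nonempty := by
  obtain ⟨a, -, ha⟩ := Finset.exists_min_image univ (fun b => countBefore π b j)
    ⟨⟨0, hn⟩, mem_univ _⟩
  exact ⟨a, by
    unfold blFeasSet
    simp only [mem_filter, mem_univ, true_and]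
    exact ⟨upos w u hw hu _ _, fun b _ => ha b (mem_univ b)⟩⟩

lemma blDist_sum {w : Fin m → ℝ} {u : Bids n m} (hn : 0 < n) (hw : ∀ j, 0 < w j)
    (hu : ∀ i j, u i j = w j) : ∑ π : Alloc n m, blDist u π = 1 := by
  have := kernel_sum (n := n) (m := m)
    (f := fun j π =>
      match π j with
      | none => if ∀ i, ¬ 0 < u i j then 1 else 0
      | some i => if i ∈ blFeasSet u π j then ((blFeasSet u π j).card : ℝ)⁻¹ else 0)
    ?_ ?_
  · exact this
  · intro j π π' hπ
    have h1 : π j = π' j := hπ j le_rfl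
    have h2 : blFeasSet u π j = blFeasSet u π' j :=
      blFeasSet_indep u π π' j (fun k hk => hπ k hk.le)
    simp only [h1, h2]
  · intro j π
    rw [Fintype.sum_option]
    have hF : ∀ c : Option (Fin n), blFeasSet u (Function.update π j c) j = blFeasSet u π j := by
      intro c
      apply blFeasSet_indep
      intro k hk
      exact Function.update_of_ne (Fin.ne_of_lt hk) c π
    have h0 : (Function.update π j (none : Option (Fin n))) j = none := Function.update_self j none π
    have hne : ¬ (∀ i, ¬ 0 < u i j) := by
      push_neg
      exact ⟨⟨0, hn⟩, upos w u hw hu _ _⟩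
    have hcard : 0 < (blFeasSet u π j).card :=
      Finset.card_pos.mpr (blFeasSet_nonempty hn hw hu π j)
    simp only [h0, Function.update_self, hF]
    rw [if_neg hne, zero_add]
    rw [Finset.sum_ite_mem, Finset.univ_inter, Finset.sum_const, nsmul_eq_mul]
    rw [mul_inv_cancel₀]
    exact Nat.cast_ne_zero.mpr hcard.ne'

lemma blDist_support {w : Fin m → ℝ} {u : Bids n m} (hn : 0 < n) (hw : ∀ j, 0 < w j)
    (hu : ∀ i j, u i j = w j) (π : Alloc n m) (j : Fin m) (h : π j = none) : blDist u π = 0 := by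
  unfold blDist
  apply Finset.prod_eq_zero (mem_univ j)
  rw [h]
  simp only
  rw [if_neg]
  push_neg
  exact ⟨⟨0, hn⟩, upos w u hw hu _ _⟩

lemma likeSet_univ {w : Fin m → ℝ} {u : Bids n m} (hw : ∀ j, 0 < w j)
    (hu : ∀ i j, u i j = w j) (j : Fin m) : likeSet u j = univ := by
  ext a
  simp [likeSet, upos w u hw hu]

lemma likeDist_actP {w : Fin m → ℝ} {u : Bids n m} (hw : ∀ j, 0 < w j)
    (hu : ∀ i j, u i j = w j) (σ : Equiv.Perm (Fin n)) (π : Alloc n m) :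
    likeDist u (actP σ π) = likeDist u π := by
  unfold likeDist
  apply prod_congr rfl
  intro k _
  cases h : π k with
  | none =>
    have h' : actP σ π k = none := by simp [actP, h]
    rw [h']
  | some a =>
    have h' : actP σ π k = some (σ a) := by simp [actP, h]
    rw [h']
    simp [likeSet_univ hw hu]

lemma likeDist_sum {w : Fin m → ℝ} {u : Bids n m} (hn : 0 < n) (hw : ∀ j, 0 < w j)
    (hu : ∀ i j, u i j = w j) : ∑ π : Alloc n m, likeDist u π = 1 := by
  have := kernel_sum (n := n) (m := m)
    (f := fun j π =>
      match π j with
      | none => if ∀ i, ¬ 0 < u i j then 1 else 0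
      | some i => if i ∈ likeSet u j then ((likeSet u j).card : ℝ)⁻¹ else 0)
    ?_ ?_
  · exact this
  · intro j π π' hπ
    have h1 : π j = π' j := hπ j le_rfl
    simp only [h1]
  · intro j π
    rw [Fintype.sum_option]
    have h0 : (Function.update π j (none : Option (Fin n))) j = none := Function.update_self j none π
    have hne : ¬ (∀ i, ¬ 0 < u i j) := by
      push_neg
      exact ⟨⟨0, hn⟩, upos w u hw hu _ _⟩
    simp only [h0, Function.update_self]
    rw [if_neg hne, zero_add]
    rw [Finset.sum_ite_mem, Finset.univ_inter, Finset.sum_const, nsmul_eq_mul]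
    rw [mul_inv_cancel₀]
    rw [likeSet_univ hw hu, card_univ, Fintype.card_fin]
    exact Nat.cast_ne_zero.mpr hn.ne'

lemma likeDist_support {w : Fin m → ℝ} {u : Bids n m} (hn : 0 < n) (hw : ∀ j, 0 < w j)
    (hu : ∀ i j, u i j = w j) (π : Alloc n m) (j : Fin m) (h : π j = none) : likeDist u π = 0 := by
  unfold likeDist
  apply Finset.prod_eq_zero (mem_univ j)
  rw [h]
  simp only
  rw [if_neg]
  push_neg
  exact ⟨⟨0, hn⟩, upos w u hw hu _ _⟩

lemma total_util {w : Fin m → ℝ} {u : Bids n m} (hu : ∀ i j, u i j = w j) (π : Alloc n m) :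
    ∑ i, util u i i π = ∑ j, if π j ≠ none then w j else 0 := by
  unfold util
  have h1 : ∀ i : Fin n, ∑ j ∈ univ.filter (fun j : Fin m => π j = some i), u i j
      = ∑ j : Fin m, if π j = some i then w j else 0 := by
    intro i
    rw [Finset.sum_filter]
    apply Finset.sum_congr rfl
    intro j _
    simp [hu]
  rw [Finset.sum_congr rfl (fun i _ => h1 i), Finset.sum_comm]
  apply Finset.sum_congr rfl
  intro j _
  cases h : π j with
  | none => simp [h]
  | some a => simp [h]

lemma pe_of_full {w : Fin m → ℝ} {u : Bids n m} (hw : ∀ j, 0 < w j)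
    (hu : ∀ i j, u i j = w j) (π : Alloc n m) (hfull : ∀ j, π j ≠ none) : ParetoEff u π := by
  rintro ⟨π', hle, i0, hlt⟩
  have h1 : ∑ i, util u i i π = ∑ j, w j := by
    rw [total_util hu]
    apply Finset.sum_congr rfl
    intro j _
    rw [if_pos (hfull j)]
  have h2 : ∑ i, util u i i π' ≤ ∑ j, w j := by
    rw [total_util hu]
    apply Finset.sum_le_sum
    intro j _
    split
    · exact le_refl _
    · exact (hw j).le
  have h3 : ∑ i, util u i i π < ∑ i, util u i i π' :=
    Finset.sum_lt_sum (fun i _ => hle i) ⟨i0, mem_univ _, hlt⟩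
  linarith

lemma pea_of_marg {w : Fin m → ℝ} {u : Bids n m} (hw : ∀ j, 0 < w j)
    (hu : ∀ i j, u i j = w j) (f : Fin m → Fin n → ℝ) (hf : ∀ h : Fin m, ∑ i, f h i = 1) :
    margPEA u f := by
  rintro ⟨q, hq0, hq1, hdom, i0, hstrict⟩
  have h1 : ∑ i, ∑ h, f h i * u i h = ∑ h, w h := by
    rw [Finset.sum_comm]
    apply Finset.sum_congr rfl
    intro h _
    have : ∀ i : Fin n, f h i * u i h = f h i * w h := by
      intro i; rw [hu]
    rw [Finset.sum_congr rfl (fun i _ => this i), ← Finset.sum_mul, hf, one_mul]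
  have h2 : ∑ i, ∑ h, q i h * u i h ≤ ∑ h, w h := by
    rw [Finset.sum_comm]
    apply Finset.sum_le_sum
    intro h _
    have : ∀ i : Fin n, q i h * u i h = q i h * w h := by
      intro i; rw [hu]
    rw [Finset.sum_congr rfl (fun i _ => this i), ← Finset.sum_mul]
    calc (∑ i, q i h) * w h ≤ 1 * w h :=
          mul_le_mul_of_nonneg_right (hq1 h) (hw h).le
      _ = w h := one_mul _
  have h3 : ∑ i, ∑ h, f h i * u i h < ∑ i, ∑ h, q i h * u i h :=
    Finset.sum_lt_sum (fun i _ => hdom i) ⟨i0, mem_univ _, hstrict⟩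
  linarith

end identical

end auxlem

/-- With identical strictly positive cardinal utilities
(`u i j = w j > 0` for all agents `i`), Balanced Like is ex ante equivalent to
Like, and both are Pareto efficient ex post and ex ante. -/
theorem stmt17 (n m : ℕ) (w : Fin m → ℝ) (hw : ∀ j, 0 < w j)
    (u : Bids n m) (hu : ∀ i j, u i j = w j) :
    (∀ (j : Fin m) (i : Fin n), genMarg (blDist u) j i = genMarg (likeDist u) j i) ∧
    (∀ π : Alloc n m, 0 < blDist u π → ParetoEff u π) ∧
    (∀ π : Alloc n m, 0 < likeDist u π → ParetoEff u π) ∧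
    margPEA u (genMarg (blDist u)) ∧ margPEA u (genMarg (likeDist u)) := by
  rcases Nat.eq_zero_or_pos n with hn | hn
  · refine ⟨fun j i => absurd i.2 (by omega), ?_, ?_, ?_, ?_⟩
    · rintro π - ⟨π', -, i, -⟩; exact absurd i.2 (by omega)
    · rintro π - ⟨π', -, i, -⟩; exact absurd i.2 (by omega)
    · rintro ⟨q, -, -, -, i, -⟩; exact absurd i.2 (by omega)
    · rintro ⟨q, -, -, -, i, -⟩; exact absurd i.2 (by omega)
  · have hbl : ∀ (j : Fin m) (i : Fin n), genMarg (blDist u) j i = (n : ℝ)⁻¹ := by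
      intro j i
      apply genMarg_symm_eq hn
      · exact blDist_sum hn hw hu
      · intro π hd j' hnone
        exact hd (blDist_support hn hw hu π j' hnone)
      · intro σ π
        exact blDist_actP hw hu σ π
    have hlk : ∀ (j : Fin m) (i : Fin n), genMarg (likeDist u) j i = (n : ℝ)⁻¹ := by
      intro j i
      apply genMarg_symm_eq hn
      · exact likeDist_sum hn hw hu
      · intro π hd j' hnone
        exact hd (likeDist_support hn hw hu π j' hnone)
      · intro σ π
        exact likeDist_actP hw hu σ π
    have hsum1 : ∀ f : Fin m → Fin n → ℝ,
        (∀ (j : Fin m) (i : Fin n), f j i = (n : ℝ)⁻¹) → ∀ h : Fin m, ∑ i, f h i = 1 := by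
      intro f hf h
      rw [Finset.sum_congr rfl (fun i _ => hf h i), Finset.sum_const, card_univ,
        Fintype.card_fin, nsmul_eq_mul, mul_inv_cancel₀ (Nat.cast_ne_zero.mpr hn.ne')]
    refine ⟨fun j i => by rw [hbl, hlk], ?_, ?_, ?_, ?_⟩
    · intro π hd
      apply pe_of_full hw hu
      intro j hj
      have := blDist_support hn hw hu π j hj
      linarith
    · intro π hd
      apply pe_of_full hw hu
      intro j hj
      have := likeDist_support hn hw hu π j hj
      linarith
    · exact pea_of_marg hw hu _ (hsum1 _ hbl)
    · exact pea_of_marg hw hu _ (hsum1 _ hlk)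

end
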